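/- Let $n\in\mathbb{N}_0$ and $q_0<q_1<\dots<q_{n+1}$ be real numbers, and let $f:[q_0,q_{n+1}]\to\mathbb{R}$ be continuous with $f(x)=A_ix+B_i$ on each $[q_i,q_{i+1}]$ and $\int_{q_i}^{q_{i+1}}(f(y)-y)\,dy=0$ for all $i\in\{0,\dots,n\}$. Then for all $i$: $A_i-1=(-1)^i\frac{q_1-q_0}{q_{i+1}-q_i}(A_0-1)$ and $B_i=(-1)^{i+1}\frac{q_{i+1}+q_i}{2}\cdot\frac{q_1-q_0}{q_{i+1}-q_i}(A_0-1)$. -/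

import Mathlib

lemma affine_interval_integral (a b C D : ℝ) :
    (∫ y in a..b, (C * y + D - y)) = (C - 1) * (b ^ 2 - a ^ 2) / 2 + D * (b - a) := by
  have h : ∀ y : ℝ, C * y + D - y = (C - 1) * y + D := by intro y; ring
  simp_rw [h]
  rw [intervalIntegral.integral_add ((intervalIntegral.intervalIntegrable_id).const_mul _)
      (intervalIntegrable_const (c := D)), intervalIntegral.integral_const_mul,
      integral_id, intervalIntegral.integral_const]
  simp [smul_eq_mul]; ring

theorem piecewise_affine_coeffs (n : ℕ) (q A B : ℕ → ℝ) (f : ℝ → ℝ)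
    (hq : ∀ i ≤ n, q i < q (i + 1)) (hq' : q n < q (n + 1))
    (hf : ContinuousOn f (Set.Icc (q 0) (q (n + 1))))
    (hpiece : ∀ i ≤ n, ∀ x ∈ Set.Icc (q i) (q (i + 1)), f x = A i * x + B i)
    (hint : ∀ i ≤ n, (∫ y in (q i)..(q (i + 1)), (f y - y)) = 0) :
    ∀ i ≤ n,
      A i - 1 = (-1 : ℝ) ^ i * ((q 1 - q 0) / (q (i + 1) - q i)) * (A 0 - 1) ∧
      B i = (-1 : ℝ) ^ (i + 1) * ((q (i + 1) + q i) / 2) *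
          ((q 1 - q 0) / (q (i + 1) - q i)) * (A 0 - 1) := by
  have hB : ∀ i ≤ n, B i = -(A i - 1) * (q (i + 1) + q i) / 2 := by
    intro i hi
    have hne : q (i + 1) - q i ≠ 0 := (sub_pos.mpr (hq i hi)).ne'
    have h0 := hint i hi
    have heq : Set.EqOn (fun y => f y - y) (fun y => A i * y + B i - y)
        (Set.uIcc (q i) (q (i + 1))) := by
      intro y hy
      rw [Set.uIcc_of_le (hq i hi).le] at hy
      simp [hpiece i hi y hy]
    rw [intervalIntegral.integral_congr heq, affine_interval_integral] at h0
    have h2 : B i * (q (i + 1) - q i) =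
        (-(A i - 1) * (q (i + 1) + q i) / 2) * (q (i + 1) - q i) := by
      linear_combination h0
    exact mul_right_cancel₀ hne h2
  have hcont : ∀ i, i + 1 ≤ n →
      A i * q (i + 1) + B i = A (i + 1) * q (i + 1) + B (i + 1) := by
    intro i hi
    have hi' : i ≤ n := Nat.le_of_succ_le hi
    have h1 := hpiece i hi' (q (i + 1)) ⟨(hq i hi').le, le_refl _⟩
    have h2 := hpiece (i + 1) hi (q (i + 1)) ⟨le_refl _, (hq (i + 1) hi).le⟩
    exact h1.symm.trans h2
  have hrec : ∀ i, i + 1 ≤ n →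
      (A (i + 1) - 1) * (q (i + 2) - q (i + 1)) = -((A i - 1) * (q (i + 1) - q i)) := by
    intro i hi
    have hi' : i ≤ n := Nat.le_of_succ_le hi
    have h := hcont i hi
    rw [hB i hi', hB (i + 1) hi] at h
    linear_combination 2 * h
  have hA : ∀ i ≤ n, (A i - 1) * (q (i + 1) - q i) =
      (-1 : ℝ) ^ i * ((A 0 - 1) * (q 1 - q 0)) := by
    intro i
    induction i with
    | zero => intro _; simp
    | succ k ih =>
      intro hk
      have hk' : k ≤ n := Nat.le_of_succ_le hk
      have h := hrec k hk
      rw [ih hk'] at h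
      rw [h]; ring
  intro i hi
  have hne : q (i + 1) - q i ≠ 0 := (sub_pos.mpr (hq i hi)).ne'
  have hAi := hA i hi
  constructor
  · field_simp
    linear_combination hAi
  · rw [hB i hi]
    field_simp
    linear_combination (-(q (i + 1) + q i)) * hAi
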